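/- Let p and q be distinct primes and set ξ = log q / log p (a positive irrational real number). Let (a,b) ∈ 𝒩 and α = p^a/q^b. Suppose A = (p^{a₁}/q^{b₁}, …, p^{a_N}/q^{b_N}) is a factorization of α and t > 1 is a real number such that f_A(t) ≤ f_B(t) for every factorization B ∈ ℱ(α). Then for every 1 ≤ n ≤ N, either (aₙ,bₙ) ∈ 𝒢 ∩ 𝒰₂(ξ) or (aₙ,bₙ) ∈ 𝒢 ∩ ℒ₁(ξ). -/

import Mathlib

open Real Finset

/-- `𝒩` is encoded by pairs `x : ℕ × ℕ` with `x ≠ (0,0)`.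
The upper set `𝒰(ξ) = {(a,b) ∈ 𝒩 : a > bξ}`. -/
def Uset (ξ : ℝ) : Set (ℕ × ℕ) := {x | x ≠ (0, 0) ∧ (x.2 : ℝ) * ξ < (x.1 : ℝ)}

/-- The lower set `ℒ(ξ) = {(a,b) ∈ 𝒩 : a < bξ}`. -/
def Lset (ξ : ℝ) : Set (ℕ × ℕ) := {x | x ≠ (0, 0) ∧ (x.1 : ℝ) < (x.2 : ℝ) * ξ}

/-- `𝒢 = {(a,b) ∈ 𝒩 : gcd(a,b) = 1}`. -/
def Gset : Set (ℕ × ℕ) := {x | x ≠ (0, 0) ∧ Nat.Coprime x.1 x.2}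

/-- `𝒰₁(ξ)`: elements `(a,b)` of `𝒰(ξ)` with `a/b ≤ m/n` (by cross multiplication)
for every `(m,n) ∈ 𝒰(ξ)` with `m ≤ a`. -/
def U1 (ξ : ℝ) : Set (ℕ × ℕ) :=
  {x | x ∈ Uset ξ ∧ ∀ y ∈ Uset ξ, y.1 ≤ x.1 → x.1 * y.2 ≤ y.1 * x.2}

/-- `𝒰₂(ξ)`: elements `(a,b)` of `𝒰(ξ)` with `a/b ≤ m/n` for every `(m,n) ∈ 𝒰(ξ)`
with `n ≤ b`. -/
def U2 (ξ : ℝ) : Set (ℕ × ℕ) :=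
  {x | x ∈ Uset ξ ∧ ∀ y ∈ Uset ξ, y.2 ≤ x.2 → x.1 * y.2 ≤ y.1 * x.2}

/-- `ℒ₁(ξ)`: elements `(a,b)` of `ℒ(ξ)` with `a/b ≥ m/n` for every `(m,n) ∈ ℒ(ξ)`
with `m ≤ a`. -/
def L1 (ξ : ℝ) : Set (ℕ × ℕ) :=
  {x | x ∈ Lset ξ ∧ ∀ y ∈ Lset ξ, y.1 ≤ x.1 → y.1 * x.2 ≤ x.1 * y.2}

/-- `ℒ₂(ξ)`: elements `(a,b)` of `ℒ(ξ)` with `a/b ≥ m/n` for every `(m,n) ∈ ℒ(ξ)`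
with `n ≤ b`. -/
def L2 (ξ : ℝ) : Set (ℕ × ℕ) :=
  {x | x ∈ Lset ξ ∧ ∀ y ∈ Lset ξ, y.2 ≤ x.2 → y.1 * x.2 ≤ x.1 * y.2}

/-- `(a,b)` is an upper or lower best approximation for `ξ`. -/
def BestApprox (ξ : ℝ) (x : ℕ × ℕ) : Prop :=
  x ∈ Gset ∩ U1 ξ ∨ x ∈ Gset ∩ L2 ξ

/-- A factorization of a positive rational `α ≠ 1`: a tuple of fractions `r n / s n` of
positive integers, none equal to `1`, with `gcd (r m) (s n) = 1` for all `m, n`, whose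
product is `α`. -/
def IsFactorization (α : ℚ) {N : ℕ} (r s : Fin N → ℕ) : Prop :=
  (∀ n, 0 < r n) ∧ (∀ n, 0 < s n) ∧ (∀ n, (r n : ℚ) / (s n : ℚ) ≠ 1) ∧
    (∀ m n, Nat.Coprime (r m) (s n)) ∧ (∏ n, (r n : ℚ) / (s n : ℚ)) = α

/-- The measure function `f_A(t) = (Σₙ m(rₙ/sₙ)^t)^{1/t}` of a factorization, where
`m(rₙ/sₙ) = log max(rₙ, sₙ)`. -/
noncomputable def fmeas {N : ℕ} (r s : Fin N → ℕ) (t : ℝ) : ℝ :=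
  (∑ n, (Real.log ((max (r n) (s n) : ℕ) : ℝ)) ^ t) ^ (1 / t)

/-! ### Auxiliary definitions and lemmas -/

noncomputable def mu (ξ : ℝ) (x : ℕ × ℕ) : ℝ := max (x.1 : ℝ) ((x.2 : ℝ) * ξ)

lemma mu_pos {ξ : ℝ} (hξ : 0 < ξ) {x : ℕ × ℕ} (hx : x ≠ (0, 0)) : 0 < mu ξ x := by
  rcases x with ⟨i, j⟩
  rcases Nat.eq_zero_or_pos i with hi | hi
  · have hj : 0 < j := by
      rcases Nat.eq_zero_or_pos j with hj | hj
      · exact absurd (by simp [hi, hj]) hx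
      · exact hj
    have : (0:ℝ) < (j:ℝ) * ξ := mul_pos (by exact_mod_cast hj) hξ
    exact lt_max_of_lt_right this
  · exact lt_max_of_lt_left (by exact_mod_cast hi)

lemma pq_pow_eq {p q : ℕ} (hp : p.Prime) (hq : q.Prime) (hpq : p ≠ q) {i j : ℕ}
    (h : p ^ i = q ^ j) : i = 0 ∧ j = 0 := by
  have hi : i = 0 := by
    by_contra hi
    have hdvd : p ∣ q ^ j := h ▸ dvd_pow_self p hi
    rcases Nat.eq_zero_or_pos j with hj | hj
    · subst hj
      simp only [pow_zero] at h
      have h1 : p ≤ p ^ i := Nat.le_self_pow hi p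
      have := hp.two_le
      omega
    · exact hpq (Nat.prime_dvd_prime_iff_eq hp hq |>.mp (hp.dvd_of_dvd_pow hdvd))
  subst hi
  simp only [pow_zero] at h
  refine ⟨rfl, ?_⟩
  by_contra hj
  have h1 : q ≤ q ^ j := Nat.le_self_pow hj q
  have := hq.two_le
  omega

/-- In the upper case, the strict-superadditivity hypothesis forces `U2` membership. -/
lemma key_U {ξ : ℝ} (hξ : 0 < ξ) {x : ℕ × ℕ}
    (hsplit : ∀ y z : ℕ × ℕ, y ≠ (0, 0) → z ≠ (0, 0) → y.1 + z.1 = x.1 →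
      y.2 + z.2 = x.2 → mu ξ x < mu ξ y + mu ξ z)
    (hU : x ∈ Uset ξ) : x ∈ U2 ξ := by
  obtain ⟨hx0, hxU⟩ := hU
  refine ⟨⟨hx0, hxU⟩, ?_⟩
  rintro ⟨m, n⟩ ⟨hy0, hyU⟩ hn
  by_contra hc
  push_neg at hc
  -- hc : m * x.2 < x.1 * n
  set a := x.1 with ha
  set b := x.2 with hb
  simp only at hyU hn hc hxU
  have hn1 : 0 < n := by
    rcases Nat.eq_zero_or_pos n with h | h
    · subst h; omega
    · exact h
  set m' : ℕ := ⌊(n : ℝ) * ξ⌋₊ + 1 with hm'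
  have hfl : (n : ℝ) * ξ < m' := by
    have := Nat.lt_floor_add_one ((n : ℝ) * ξ)
    push_cast [hm']; exact_mod_cast this
  have hmm' : m' ≤ m := by
    have : (⌊(n : ℝ) * ξ⌋₊ : ℝ) < m := lt_of_le_of_lt (Nat.floor_le (by positivity)) hyU
    have : ⌊(n : ℝ) * ξ⌋₊ < m := by exact_mod_cast this
    omega
  have hm'b : m' * b < a * n := lt_of_le_of_lt (Nat.mul_le_mul_right b hmm') hc
  -- key real inequality : m' + (b - n) ξ < a
  have hkey : (m' : ℝ) + ((b : ℝ) - n) * ξ < a := by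
    have hbn : (0:ℝ) ≤ (b : ℝ) - (n : ℝ) := sub_nonneg.mpr (by exact_mod_cast hn)
    have h1 : ((b : ℝ) - n) * ((n : ℝ) * ξ) ≤ ((b : ℝ) - n) * m' :=
      mul_le_mul_of_nonneg_left hfl.le hbn
    have h2 : (m' : ℝ) * b < a * n := by exact_mod_cast hm'b
    have hn' : (0:ℝ) < n := by exact_mod_cast hn1
    nlinarith [hn'.le]
  have ham' : m' < a := by
    have h3 : (0:ℝ) ≤ ((b : ℝ) - n) * ξ := by
      apply mul_nonneg _ hξ.le
      exact sub_nonneg.mpr (by exact_mod_cast hn)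
    have : (m' : ℝ) < a := by linarith
    exact_mod_cast this
  have hnb : n ≤ b := hn
  have := hsplit (m', n) (a - m', b - n) (by simp [hm']) (by
      intro h
      have : a - m' = 0 := (Prod.mk.injEq _ _ _ _).mp h |>.1
      omega)
    (by show m' + (a - m') = a; omega) (by show n + (b - n) = b; omega)
  -- compute the three mu values
  have hmux : mu ξ x = a := max_eq_left hxU.le
  have hmuy : mu ξ (m', n) = m' := max_eq_left hfl.le
  have hmuz : mu ξ (a - m', b - n) = (a : ℝ) - m' := by
    have hc1 : ((a - m' : ℕ) : ℝ) = (a : ℝ) - m' := by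
      push_cast [Nat.cast_sub ham'.le]; ring
    have hc2 : ((b - n : ℕ) : ℝ) = (b : ℝ) - n := by
      push_cast [Nat.cast_sub hnb]; ring
    unfold mu
    simp only [hc1, hc2]
    exact max_eq_left (by linarith)
  rw [hmux, hmuy, hmuz] at this
  linarith

lemma key_L {ξ : ℝ} (hξ : 0 < ξ) {x : ℕ × ℕ}
    (hsplit : ∀ y z : ℕ × ℕ, y ≠ (0, 0) → z ≠ (0, 0) → y.1 + z.1 = x.1 →
      y.2 + z.2 = x.2 → mu ξ x < mu ξ y + mu ξ z)
    (hL : x ∈ Lset ξ) : x ∈ L1 ξ := by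
  obtain ⟨hx0, hxL⟩ := hL
  refine ⟨⟨hx0, hxL⟩, ?_⟩
  rintro ⟨m, n⟩ ⟨hy0, hyL⟩ hm
  by_contra hc
  push_neg at hc
  -- hc : x.1 * n < m * x.2
  set a := x.1 with ha
  set b := x.2 with hb
  simp only at hyL hm hc hxL
  have hm1 : 0 < m := by
    rcases Nat.eq_zero_or_pos m with h | h
    · subst h; simp at hc
    · exact h
  set n' : ℕ := ⌊(m : ℝ) / ξ⌋₊ + 1 with hn'
  have hfl : (m : ℝ) < (n' : ℝ) * ξ := by
    have h := Nat.lt_floor_add_one ((m : ℝ) / ξ)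
    have : (m : ℝ) / ξ < n' := by push_cast [hn']; exact_mod_cast h
    calc (m : ℝ) = (m : ℝ) / ξ * ξ := by field_simp
    _ < (n' : ℝ) * ξ := by exact mul_lt_mul_of_pos_right this hξ
  have hnn' : n' ≤ n := by
    have h1 : (m : ℝ) / ξ < n := (div_lt_iff₀ hξ).mpr hyL
    have : ⌊(m : ℝ) / ξ⌋₊ < n := by
      have := Nat.floor_le (by positivity : (0:ℝ) ≤ (m : ℝ) / ξ)
      exact_mod_cast lt_of_le_of_lt this h1
    omega
  have han' : a * n' < m * b := lt_of_le_of_lt (Nat.mul_le_mul_left a hnn') hc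
  -- key real inequality : (a - m) + n' ξ < b ξ
  have hkey : ((a : ℝ) - m) + (n' : ℝ) * ξ < (b : ℝ) * ξ := by
    have h1 : ((a : ℝ) - m) * m ≤ ((a : ℝ) - m) * ((n' : ℝ) * ξ) :=
      mul_le_mul_of_nonneg_left hfl.le (sub_nonneg.mpr (by exact_mod_cast hm))
    have h2 : (a : ℝ) * n' < m * b := by exact_mod_cast han'
    have h2' : (a : ℝ) * ((n' : ℝ) * ξ) < (m : ℝ) * ((b : ℝ) * ξ) := by
      have := mul_lt_mul_of_pos_right h2 hξ
      nlinarith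
    have hm' : (0:ℝ) < m := by exact_mod_cast hm1
    nlinarith
  have hn'b : n' < b := by
    have h3 : (0:ℝ) ≤ (a : ℝ) - m := sub_nonneg.mpr (by exact_mod_cast hm)
    have : (n' : ℝ) * ξ < (b : ℝ) * ξ := by linarith
    have := lt_of_mul_lt_mul_right this hξ.le
    exact_mod_cast this
  have := hsplit (m, n') (a - m, b - n') (by
      intro h
      have : m = 0 := (Prod.mk.injEq _ _ _ _).mp h |>.1
      omega)
    (by
      intro h
      have : b - n' = 0 := (Prod.mk.injEq _ _ _ _).mp h |>.2
      omega)
    (by show m + (a - m) = a; omega) (by show n' + (b - n') = b; omega)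
  have hmux : mu ξ x = (b : ℝ) * ξ := max_eq_right hxL.le
  have hmuy : mu ξ (m, n') = (n' : ℝ) * ξ := max_eq_right hfl.le
  have hmuz : mu ξ (a - m, b - n') = ((b : ℝ) - n') * ξ := by
    have hc1 : ((a - m : ℕ) : ℝ) = (a : ℝ) - m := by
      push_cast [Nat.cast_sub hm]; ring
    have hc2 : ((b - n' : ℕ) : ℝ) = (b : ℝ) - n' := by
      push_cast [Nat.cast_sub hn'b.le]; ring
    unfold mu
    simp only [hc1, hc2]
    refine max_eq_right ?_
    nlinarith
  rw [hmux, hmuy, hmuz] at this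
  nlinarith

lemma key_G {ξ : ℝ} (hξ : 0 < ξ) {x : ℕ × ℕ} (hx0 : x ≠ (0, 0))
    (hsplit : ∀ y z : ℕ × ℕ, y ≠ (0, 0) → z ≠ (0, 0) → y.1 + z.1 = x.1 →
      y.2 + z.2 = x.2 → mu ξ x < mu ξ y + mu ξ z) :
    Nat.Coprime x.1 x.2 := by
  rcases x with ⟨i, j⟩
  by_contra hcop
  set d := Nat.gcd i j with hd
  have hd0 : d ≠ 0 := by
    intro h
    have h1 := Nat.eq_zero_of_gcd_eq_zero_left (hd ▸ h)
    have h2 := Nat.eq_zero_of_gcd_eq_zero_right (hd ▸ h)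
    exact hx0 (by simp [h1, h2])
  have hd1 : d ≠ 1 := hcop
  have hd2 : 2 ≤ d := by omega
  set i₀ := i / d with hi₀
  set j₀ := j / d with hj₀
  have hi : d * i₀ = i := Nat.mul_div_cancel' (Nat.gcd_dvd_left i j)
  have hj : d * j₀ = j := Nat.mul_div_cancel' (Nat.gcd_dvd_right i j)
  have hy0 : (i₀, j₀) ≠ ((0, 0) : ℕ × ℕ) := by
    intro h
    obtain ⟨h1, h2⟩ := Prod.mk.injEq _ _ _ _ |>.mp h
    exact hx0 (by simp [← hi, ← hj, h1, h2])
  have hmul : ∀ (c : ℕ) (y : ℕ × ℕ), mu ξ (c * y.1, c * y.2) = (c : ℝ) * mu ξ y := by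
    intro c y
    unfold mu
    push_cast
    rw [mul_max_of_nonneg _ _ (by positivity : (0:ℝ) ≤ (c:ℝ)), mul_assoc]
  have := hsplit (i₀, j₀) ((d - 1) * i₀, (d - 1) * j₀) hy0
    (by
      intro h
      obtain ⟨h1, h2⟩ := Prod.mk.injEq _ _ _ _ |>.mp h
      apply hy0
      have e1 : i₀ = 0 := by
        rcases Nat.mul_eq_zero.mp h1 with h' | h'
        · omega
        · exact h'
      have e2 : j₀ = 0 := by
        rcases Nat.mul_eq_zero.mp h2 with h' | h'
        · omega
        · exact h'
      simp [e1, e2])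
    (by
      show i₀ + (d - 1) * i₀ = i
      calc i₀ + (d - 1) * i₀ = (1 + (d - 1)) * i₀ := by ring
      _ = d * i₀ := by congr 1; omega
      _ = i := hi)
    (by
      show j₀ + (d - 1) * j₀ = j
      calc j₀ + (d - 1) * j₀ = (1 + (d - 1)) * j₀ := by ring
      _ = d * j₀ := by congr 1; omega
      _ = j := hj)
  have e1 : mu ξ (i, j) = (d : ℝ) * mu ξ (i₀, j₀) := by
    have h' := hmul d (i₀, j₀)
    simp only at h'
    rw [hi, hj] at h'
    exact h'
  have e2 : mu ξ ((d - 1) * i₀, (d - 1) * j₀) = ((d : ℝ) - 1) * mu ξ (i₀, j₀) := by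
    have h' := hmul (d - 1) (i₀, j₀)
    have hc : ((d - 1 : ℕ) : ℝ) = (d : ℝ) - 1 := by
      push_cast [Nat.cast_sub (by omega : 1 ≤ d)]; ring
    simpa [hc] using h'
  rw [e1, e2] at this
  have hpos : 0 < mu ξ (i₀, j₀) := mu_pos hξ hy0
  nlinarith

lemma ratio_ne_one {p q : ℕ} (hp : p.Prime) (hq : q.Prime) (hpq : p ≠ q) {i j : ℕ}
    (hij : (i, j) ≠ ((0, 0) : ℕ × ℕ)) : ((p ^ i : ℕ) : ℚ) / ((q ^ j : ℕ) : ℚ) ≠ 1 := by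
  intro h
  have hq0 : ((q ^ j : ℕ) : ℚ) ≠ 0 := by
    exact_mod_cast (pow_ne_zero j hq.pos.ne')
  have heq : ((p ^ i : ℕ) : ℚ) = ((q ^ j : ℕ) : ℚ) := by
    rw [div_eq_one_iff_eq hq0] at h; exact h
  have : p ^ i = q ^ j := by exact_mod_cast heq
  obtain ⟨h1, h2⟩ := pq_pow_eq hp hq hpq this
  exact hij (by simp [h1, h2])

lemma prod_ratio {p q : ℕ} {M : ℕ} (C D : Fin M → ℕ) :
    (∏ k, ((p ^ C k : ℕ) : ℚ) / ((q ^ D k : ℕ) : ℚ)) =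
      (p : ℚ) ^ (∑ k, C k) / (q : ℚ) ^ (∑ k, D k) := by
  push_cast
  rw [Finset.prod_div_distrib, Finset.prod_pow_eq_pow_sum, Finset.prod_pow_eq_pow_sum]

lemma rpow_strict {u v t : ℝ} (hu : 0 < u) (hv : 0 < v) (ht : 1 < t) :
    u ^ t + v ^ t < (u + v) ^ t := by
  have huv : 0 < u + v := by linarith
  have e1 : u ^ t = u * u ^ (t - 1) := by
    rw [show t = 1 + (t - 1) by ring, Real.rpow_add hu, Real.rpow_one]
    ring_nf
  have e2 : v ^ t = v * v ^ (t - 1) := by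
    rw [show t = 1 + (t - 1) by ring, Real.rpow_add hv, Real.rpow_one]
    ring_nf
  have e3 : (u + v) ^ t = (u + v) * (u + v) ^ (t - 1) := by
    rw [show t = 1 + (t - 1) by ring, Real.rpow_add huv, Real.rpow_one]
    ring_nf
  have h2 : u ^ (t - 1) < (u + v) ^ (t - 1) :=
    Real.rpow_lt_rpow hu.le (by linarith) (by linarith)
  have h3 : v ^ (t - 1) < (u + v) ^ (t - 1) :=
    Real.rpow_lt_rpow hv.le (by linarith) (by linarith)
  rw [e1, e2, e3]
  nlinarith [Real.rpow_pos_of_pos huv (t - 1)]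

lemma log_max_eq {p q : ℕ} (hp : p.Prime) (hq : q.Prime) {ξ : ℝ}
    (hξlog : ξ * Real.log p = Real.log q) (w : ℕ × ℕ) :
    Real.log ((max (p ^ w.1) (q ^ w.2) : ℕ) : ℝ) = Real.log p * mu ξ w := by
  rcases w with ⟨i, j⟩
  have hp1 : (1 : ℝ) ≤ (p : ℝ) ^ i := by
    exact_mod_cast Nat.one_le_pow i p hp.pos
  have hq1 : (1 : ℝ) ≤ (q : ℝ) ^ j := by
    exact_mod_cast Nat.one_le_pow j q hq.pos
  have h1 : ((max (p ^ i) (q ^ j) : ℕ) : ℝ) = max ((p : ℝ) ^ i) ((q : ℝ) ^ j) := by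
    push_cast; rfl
  have hlogmax : Real.log (max ((p : ℝ) ^ i) ((q : ℝ) ^ j)) =
      max (Real.log ((p : ℝ) ^ i)) (Real.log ((q : ℝ) ^ j)) := by
    rcases le_total ((p : ℝ) ^ i) ((q : ℝ) ^ j) with h | h
    · rw [max_eq_right h, max_eq_right (Real.log_le_log (lt_of_lt_of_le one_pos hp1) h)]
    · rw [max_eq_left h, max_eq_left (Real.log_le_log (lt_of_lt_of_le one_pos hq1) h)]
  rw [h1, hlogmax, Real.log_pow, Real.log_pow]
  unfold mu
  rw [mul_max_of_nonneg _ _ (Real.log_nonneg (by exact_mod_cast hp.one_lt.le))]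
  simp only []
  congr 1
  · ring
  · rw [← hξlog]; ring

/-- Theorem `FirstAxioms`: if a factorization
`(p^{a_1}/q^{b_1}, ..., p^{a_N}/q^{b_N})` of `α = p^a/q^b` attains the infimum in
`m_t(α)` over `ℱ(α)` for some `t > 1`, then each `(aₙ,bₙ)` lies in `𝒢 ∩ 𝒰₂(ξ)` or
`𝒢 ∩ ℒ₁(ξ)`, where `ξ = log q / log p`. -/
theorem stmt_0 (p q : ℕ) (hp : p.Prime) (hq : q.Prime) (hpq : p ≠ q)
    (ξ : ℝ) (hξ : ξ = Real.log q / Real.log p)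
    (a b : ℕ) (hab : (a, b) ≠ (0, 0))
    (N : ℕ) (A B : Fin N → ℕ)
    (hfact : IsFactorization ((p : ℚ) ^ a / (q : ℚ) ^ b)
      (fun n => p ^ A n) (fun n => q ^ B n))
    (t : ℝ) (ht : 1 < t)
    (hmin : ∀ (M : ℕ) (r s : Fin M → ℕ),
      IsFactorization ((p : ℚ) ^ a / (q : ℚ) ^ b) r s →
      fmeas (fun n => p ^ A n) (fun n => q ^ B n) t ≤ fmeas r s t) :
    ∀ n : Fin N, (A n, B n) ∈ Gset ∩ U2 ξ ∨ (A n, B n) ∈ Gset ∩ L1 ξ := by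
  have hplog : 0 < Real.log p := Real.log_pos (by exact_mod_cast hp.one_lt)
  have hqlog : 0 < Real.log q := Real.log_pos (by exact_mod_cast hq.one_lt)
  have hξpos : 0 < ξ := hξ ▸ div_pos hqlog hplog
  have hξlog : ξ * Real.log p = Real.log q := by
    rw [hξ]; field_simp
  -- irrationality-style statement
  have hne : ∀ i j : ℕ, (i, j) ≠ ((0, 0) : ℕ × ℕ) → (i : ℝ) ≠ (j : ℝ) * ξ := by
    intro i j hij h
    have h1 : Real.log ((p : ℝ) ^ i) = Real.log ((q : ℝ) ^ j) := by
      rw [Real.log_pow, Real.log_pow]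
      rw [← hξlog]
      push_cast
      nlinarith
    have hppos : (0 : ℝ) < (p : ℝ) ^ i := pow_pos (by exact_mod_cast hp.pos) i
    have hqpos : (0 : ℝ) < (q : ℝ) ^ j := pow_pos (by exact_mod_cast hq.pos) j
    have h2 : ((p : ℝ) ^ i) = ((q : ℝ) ^ j) := by
      have := congrArg Real.exp h1
      rwa [Real.exp_log hppos, Real.exp_log hqpos] at this
    have h3 : p ^ i = q ^ j := by exact_mod_cast h2
    obtain ⟨e1, e2⟩ := pq_pow_eq hp hq hpq h3
    exact hij (by simp [e1, e2])
  obtain ⟨hr, hs, hne1, hcop, hprod⟩ := hfact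
  have hAB0 : ∀ k, (A k, B k) ≠ ((0, 0) : ℕ × ℕ) := by
    intro k h
    obtain ⟨h1, h2⟩ := Prod.mk.injEq _ _ _ _ |>.mp h
    exact hne1 k (by simp [h1, h2])
  -- key superadditivity property derived from minimality
  have hsplit : ∀ (k : Fin N) (y z : ℕ × ℕ), y ≠ (0, 0) → z ≠ (0, 0) →
      y.1 + z.1 = A k → y.2 + z.2 = B k →
      mu ξ (A k, B k) < mu ξ y + mu ξ z := by
    intro k y z hy0 hz0 hs1 hs2
    set A' : Fin (N + 1) → ℕ := Fin.snoc (Function.update A k y.1) z.1 with hA'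
    set B' : Fin (N + 1) → ℕ := Fin.snoc (Function.update B k y.2) z.2 with hB'
    have hsumA : ∑ i, A' i = ∑ i, A i := by
      rw [Fin.sum_univ_castSucc]
      simp only [hA', Fin.snoc_castSucc, Fin.snoc_last]
      rw [Finset.sum_update_of_mem (Finset.mem_univ k)]
      rw [Finset.sum_eq_add_sum_sdiff_singleton_of_mem (Finset.mem_univ k) A]
      omega
    have hsumB : ∑ i, B' i = ∑ i, B i := by
      rw [Fin.sum_univ_castSucc]
      simp only [hB', Fin.snoc_castSucc, Fin.snoc_last]
      rw [Finset.sum_update_of_mem (Finset.mem_univ k)]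
      rw [Finset.sum_eq_add_sum_sdiff_singleton_of_mem (Finset.mem_univ k) B]
      omega
    have hfact' : IsFactorization ((p : ℚ) ^ a / (q : ℚ) ^ b)
        (fun i => p ^ A' i) (fun i => q ^ B' i) := by
      refine ⟨fun i => pow_pos hp.pos _, fun i => pow_pos hq.pos _, ?_, ?_, ?_⟩
      · intro i
        refine Fin.lastCases ?_ ?_ i
        · simp only [hA', hB', Fin.snoc_last]
          exact ratio_ne_one hp hq hpq (by simpa using hz0)
        · intro i
          simp only [hA', hB', Fin.snoc_castSucc]
          rcases eq_or_ne i k with h | h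
          · subst h
            simp only [Function.update_self]
            exact ratio_ne_one hp hq hpq (by simpa using hy0)
          · simp only [Function.update_of_ne h]
            exact ratio_ne_one hp hq hpq (hAB0 i)
      · intro i j
        exact Nat.Coprime.pow _ _ ((Nat.coprime_primes hp hq).mpr hpq)
      · have h1 := prod_ratio (p := p) (q := q) A' B'
        have h2 := prod_ratio (p := p) (q := q) A B
        simp only at h1 h2 ⊢
        rw [h1, hsumA, hsumB, ← h2]
        exact hprod
    have hm := hmin (N + 1) _ _ hfact'
    -- convert fmeas inequality to sum inequality
    set SA := ∑ i, (Real.log ((max (p ^ A i) (q ^ B i) : ℕ) : ℝ)) ^ t with hSA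
    set SB := ∑ i, (Real.log ((max (p ^ A' i) (q ^ B' i) : ℕ) : ℝ)) ^ t with hSB
    have hterm_nonneg : ∀ (M : ℕ) (C D : Fin M → ℕ) (i : Fin M),
        0 ≤ (Real.log ((max (p ^ C i) (q ^ D i) : ℕ) : ℝ)) ^ t := by
      intro M C D i
      apply Real.rpow_nonneg
      apply Real.log_nonneg
      have : 1 ≤ max (p ^ C i) (q ^ D i) := le_max_of_le_left (Nat.one_le_pow _ _ hp.pos)
      exact_mod_cast this
    have hSAnn : 0 ≤ SA := Finset.sum_nonneg fun i _ => hterm_nonneg N A B i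
    have hSBnn : 0 ≤ SB := Finset.sum_nonneg fun i _ => hterm_nonneg (N + 1) A' B' i
    have ht0 : (0 : ℝ) < t := by linarith
    have hrpow_id : ∀ u : ℝ, 0 ≤ u → (u ^ (1 / t)) ^ t = u := by
      intro u hu
      rw [← Real.rpow_mul hu, one_div, inv_mul_cancel₀ ht0.ne', Real.rpow_one]
    have hSles : SA ≤ SB := by
      have hmm : SA ^ (1 / t) ≤ SB ^ (1 / t) := hm
      calc SA = (SA ^ (1 / t)) ^ t := (hrpow_id SA hSAnn).symm
      _ ≤ (SB ^ (1 / t)) ^ t :=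
        Real.rpow_le_rpow (Real.rpow_nonneg hSAnn _) hmm ht0.le
      _ = SB := hrpow_id SB hSBnn
    -- decompose SB
    set G : Fin N → ℝ := fun i => (Real.log ((max (p ^ A i) (q ^ B i) : ℕ) : ℝ)) ^ t with hG
    set Fy : ℝ := (Real.log ((max (p ^ y.1) (q ^ y.2) : ℕ) : ℝ)) ^ t with hFy
    set Fz : ℝ := (Real.log ((max (p ^ z.1) (q ^ z.2) : ℕ) : ℝ)) ^ t with hFz
    have hSBeq : SB = Fy + (∑ i ∈ Finset.univ \ {k}, G i) + Fz := by
      rw [hSB, Fin.sum_univ_castSucc]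
      simp only [hA', hB', Fin.snoc_castSucc, Fin.snoc_last]
      congr 1
      have hfun : (fun i => (Real.log ((max (p ^ Function.update A k y.1 i)
          (q ^ Function.update B k y.2 i) : ℕ) : ℝ)) ^ t) = Function.update G k Fy := by
        funext i
        rcases eq_or_ne i k with h | h
        · subst h
          simp [Function.update_self, hFy]
        · simp [Function.update_of_ne h, hG]
      calc ∑ i, (Real.log ((max (p ^ Function.update A k y.1 i)
            (q ^ Function.update B k y.2 i) : ℕ) : ℝ)) ^ t
          = ∑ i, Function.update G k Fy i := by rw [hfun]
      _ = Fy + ∑ i ∈ Finset.univ \ {k}, G i :=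
          Finset.sum_update_of_mem (Finset.mem_univ k) _ _
    have hSAeq : SA = G k + ∑ i ∈ Finset.univ \ {k}, G i :=
      Finset.sum_eq_add_sum_sdiff_singleton_of_mem (Finset.mem_univ k) G
    have hkey : G k ≤ Fy + Fz := by
      rw [hSAeq] at hSles
      rw [hSBeq] at hSles
      linarith
    -- rewrite in terms of mu
    rw [hG] at hkey
    simp only at hkey
    have eX := log_max_eq hp hq hξlog (A k, B k)
    have eY := log_max_eq hp hq hξlog y
    have eZ := log_max_eq hp hq hξlog z
    simp only at eX
    rw [eX] at hkey
    rw [hFy, eY, hFz, eZ] at hkey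
    -- conclude by strict convexity
    by_contra hcon
    push_neg at hcon
    have hmuy : 0 < mu ξ y := mu_pos hξpos hy0
    have hmuz : 0 < mu ξ z := mu_pos hξpos hz0
    have hu : 0 < Real.log p * mu ξ y := mul_pos hplog hmuy
    have hv : 0 < Real.log p * mu ξ z := mul_pos hplog hmuz
    have hstrict := rpow_strict hu hv ht
    have hle : Real.log p * mu ξ y + Real.log p * mu ξ z ≤ Real.log p * mu ξ (A k, B k) := by
      rw [← mul_add]
      exact mul_le_mul_of_nonneg_left hcon hplog.le
    have := Real.rpow_le_rpow (by linarith : (0:ℝ) ≤ Real.log p * mu ξ y + Real.log p * mu ξ z)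
      hle ht0.le
    linarith
  intro n
  have hxne := hAB0 n
  have hG : (A n, B n) ∈ Gset := ⟨hxne, key_G hξpos hxne (hsplit n)⟩
  rcases lt_trichotomy ((A n : ℝ)) ((B n : ℝ) * ξ) with h | h | h
  · right
    exact ⟨hG, key_L hξpos (hsplit n) ⟨hxne, h⟩⟩
  · exact absurd h (hne (A n) (B n) hxne)
  · left
    exact ⟨hG, key_U hξpos (hsplit n) ⟨hxne, h⟩⟩
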